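/- The function z ↦ ∑_{n=1}^∞ ∫_0^1 t/(n+t)^{z+1} dt is holomorphic on the half-plane {z : Re(z) > 0}. -/

import Mathlib

open intervalIntegral MeasureTheory Set Metric

lemma log_cont (n : ℕ) :
    ContinuousOn (fun t : ℝ => Real.log ((n + 1 : ℕ) + t)) (Set.uIcc (0:ℝ) 1) := by
  apply Real.continuousOn_log.comp (by fun_prop)
  intro t ht
  rw [Set.uIcc_of_le (by norm_num)] at ht
  simp only [Set.mem_compl_iff, Set.mem_singleton_iff]
  have h0 : (0:ℝ) ≤ t := ht.1
  positivity

lemma aux_cont (n : ℕ) (z : ℂ) :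
    ContinuousOn (fun t : ℝ => (t : ℂ) * Complex.exp (-(z + 1) * Real.log ((n + 1 : ℕ) + t)))
      (Set.uIcc (0:ℝ) 1) := by
  apply Complex.continuous_ofReal.continuousOn.mul
  apply Complex.continuous_exp.comp_continuousOn
  exact continuousOn_const.mul (Complex.continuous_ofReal.comp_continuousOn (log_cont n))

lemma aux_cont' (n : ℕ) (z : ℂ) :
    ContinuousOn (fun t : ℝ => (t : ℂ) * (Complex.exp (-(z + 1) * Real.log ((n + 1 : ℕ) + t)) *
      (-1 * (Real.log ((n + 1 : ℕ) + t) : ℂ)))) (Set.uIcc (0:ℝ) 1) := by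
  apply Complex.continuous_ofReal.continuousOn.mul
  apply ContinuousOn.mul
  · apply Complex.continuous_exp.comp_continuousOn
    exact continuousOn_const.mul (Complex.continuous_ofReal.comp_continuousOn (log_cont n))
  · exact continuousOn_const.mul (Complex.continuous_ofReal.comp_continuousOn (log_cont n))

lemma aux_diff (n : ℕ) (z₀ : ℂ) :
    DifferentiableAt ℂ (fun z : ℂ => ∫ t in (0:ℝ)..1,
      (t : ℂ) * Complex.exp (-(z + 1) * Real.log ((n + 1 : ℕ) + t))) z₀ := by
  set c : ℝ → ℝ := fun t => Real.log ((n + 1 : ℕ) + t) with hc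
  have hmem : ∀ t ∈ Set.uIoc (0:ℝ) 1, 0 < t ∧ t ≤ 1 := by
    intro t ht
    rw [Set.uIoc_of_le (by norm_num)] at ht
    exact ⟨ht.1, ht.2⟩
  have hcbd : ∀ t ∈ Set.uIoc (0:ℝ) 1, 0 ≤ c t ∧ c t ≤ Real.log ((n:ℝ) + 2) := by
    intro t ht
    obtain ⟨h0, h1⟩ := hmem t ht
    constructor
    · apply Real.log_nonneg; push_cast; linarith
    · apply Real.log_le_log (by push_cast; linarith); push_cast; linarith
  have key := intervalIntegral.hasDerivAt_integral_of_dominated_loc_of_deriv_le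
    (𝕜 := ℂ) (μ := MeasureTheory.volume) (a := (0:ℝ)) (b := 1)
    (F := fun z t => (t : ℂ) * Complex.exp (-(z + 1) * c t))
    (F' := fun z t => (t : ℂ) * (Complex.exp (-(z + 1) * c t) * (-1 * (c t : ℂ))))
    (x₀ := z₀)
    (bound := fun _ => Real.log ((n:ℝ) + 2) * Real.exp ((|z₀.re| + 2) * Real.log ((n:ℝ) + 2)))
    (s := Metric.ball z₀ 1) (Metric.ball_mem_nhds z₀ one_pos)
    (Filter.Eventually.of_forall fun z =>
      ((aux_cont n z).mono Set.uIoc_subset_uIcc).aestronglyMeasurable measurableSet_uIoc)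
    ((aux_cont n z₀).intervalIntegrable)
    ?meas' ?bound (intervalIntegrable_const) ?diff
  · exact key.2.differentiableAt
  case meas' =>
    exact ((aux_cont' n z₀).mono Set.uIoc_subset_uIcc).aestronglyMeasurable measurableSet_uIoc
  case bound =>
    apply Filter.Eventually.of_forall
    intro t ht z hz
    obtain ⟨h0, h1⟩ := hmem t ht
    obtain ⟨hc0, hc1⟩ := hcbd t ht
    have hlog2 : (0:ℝ) ≤ Real.log ((n:ℝ) + 2) := le_trans hc0 hc1
    rw [norm_mul, norm_mul, norm_mul, Complex.norm_exp]
    have hre : (-(z + 1) * (c t : ℂ)).re = -(z.re + 1) * c t := by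
      simp [Complex.mul_re, Complex.add_re, Complex.neg_re]
    rw [hre]
    have hzre : |z.re - z₀.re| < 1 := by
      calc |z.re - z₀.re| = |(z - z₀).re| := by simp
        _ ≤ ‖z - z₀‖ := Complex.abs_re_le_norm _
        _ < 1 := by simpa [Complex.dist_eq] using hz
    have h2 : -(z.re + 1) * c t ≤ (|z₀.re| + 2) * Real.log ((n:ℝ) + 2) := by
      have : -(z.re + 1) ≤ |z₀.re| + 2 := by
        cases abs_cases (z.re - z₀.re) with
        | inl h => cases abs_cases z₀.re with
          | inl h' => linarith [h.1, hzre]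
          | inr h' => linarith [abs_sub_abs_le_abs_sub z.re z₀.re, hzre, h'.1]
        | inr h => cases abs_cases z₀.re with
          | inl h' => linarith [hzre, h.1]
          | inr h' => linarith [hzre, h.1, h'.1]
      calc -(z.re + 1) * c t ≤ (|z₀.re| + 2) * c t :=
            mul_le_mul_of_nonneg_right this hc0
        _ ≤ (|z₀.re| + 2) * Real.log ((n:ℝ) + 2) := by
            apply mul_le_mul_of_nonneg_left hc1 (by positivity)
    calc ‖(t:ℂ)‖ * (Real.exp (-(z.re + 1) * c t) * (‖(-1:ℂ)‖ * ‖(c t : ℂ)‖))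
        ≤ 1 * (Real.exp ((|z₀.re| + 2) * Real.log ((n:ℝ) + 2)) * (1 * Real.log ((n:ℝ) + 2))) := by
          apply mul_le_mul
          · simpa [Complex.norm_real, abs_of_pos h0] using h1
          · apply mul_le_mul (Real.exp_le_exp.mpr h2)
            · simp [Complex.norm_real, abs_of_nonneg hc0, hc1]
            · positivity
            · positivity
          · positivity
          · norm_num
      _ = Real.log ((n:ℝ) + 2) * Real.exp ((|z₀.re| + 2) * Real.log ((n:ℝ) + 2)) := by ring
  case diff =>
    apply Filter.Eventually.of_forall
    intro t _ z _
    have h1 : HasDerivAt (fun z : ℂ => -(z + 1) * (c t : ℂ)) (-1 * (c t : ℂ)) z :=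
      (((hasDerivAt_id z).add_const 1).neg).mul_const _
    exact (h1.cexp.const_mul _)

theorem stmt_6 :
    DifferentiableOn ℂ
      (fun z : ℂ => ∑' n : ℕ, ∫ t in (0:ℝ)..1,
        (t : ℂ) * Complex.exp (-(z + 1) * Real.log ((n + 1 : ℕ) + t)))
      {z : ℂ | 0 < z.re} := by
  intro z₀ hz₀
  have hz₀re : 0 < z₀.re := hz₀
  set ε := z₀.re / 2 with hε
  have hεpos : 0 < ε := by positivity
  set S : Set ℂ := {z : ℂ | ε < z.re} with hS
  have hSopen : IsOpen S := isOpen_lt continuous_const Complex.continuous_re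
  have hz₀S : z₀ ∈ S := by simp [hS, hε]; linarith
  have hsum : Summable (fun n : ℕ => ((n:ℝ) + 1) ^ (-(1 + ε))) := by
    have := (Real.summable_nat_rpow (p := -(1 + ε))).mpr (by linarith)
    have h2 := (summable_nat_add_iff (f := fun n : ℕ => (n:ℝ) ^ (-(1 + ε))) 1).mpr this
    convert h2 using 2 with n
    · rfl
    push_cast; ring_nf
  have hdiff : DifferentiableOn ℂ
      (fun z : ℂ => ∑' n : ℕ, ∫ t in (0:ℝ)..1,
        (t : ℂ) * Complex.exp (-(z + 1) * Real.log ((n + 1 : ℕ) + t))) S := by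
    apply Complex.differentiableOn_tsum_of_summable_norm hsum
      (fun n => fun z _ => (aux_diff n z).differentiableWithinAt) hSopen
    intro n z hzS
    have hbd : ∀ t ∈ Set.uIoc (0:ℝ) 1,
        ‖(t : ℂ) * Complex.exp (-(z + 1) * Real.log ((n + 1 : ℕ) + t))‖
          ≤ ((n:ℝ) + 1) ^ (-(1 + ε)) := by
      intro t ht
      rw [Set.uIoc_of_le (by norm_num)] at ht
      obtain ⟨h0, h1⟩ := ht
      have hc0 : 0 ≤ Real.log ((n + 1 : ℕ) + t) := by
        apply Real.log_nonneg; push_cast; linarith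
      have hc1 : Real.log ((n:ℝ) + 1) ≤ Real.log ((n + 1 : ℕ) + t) := by
        apply Real.log_le_log (by positivity); push_cast; linarith
      have hzre : ε < z.re := hzS
      rw [norm_mul, Complex.norm_exp]
      have hre : (-(z + 1) * (Real.log ((n + 1 : ℕ) + t) : ℂ)).re
          = -(z.re + 1) * Real.log ((n + 1 : ℕ) + t) := by
        simp [Complex.mul_re, Complex.add_re, Complex.neg_re]
      rw [hre]
      have h2 : -(z.re + 1) * Real.log ((n + 1 : ℕ) + t)
          ≤ -(1 + ε) * Real.log ((n:ℝ) + 1) := by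
        have := mul_le_mul (le_of_lt (by linarith : 1 + ε < z.re + 1)) hc1
          (Real.log_nonneg (by push_cast; linarith)) (by linarith)
        nlinarith
      calc ‖(t:ℂ)‖ * Real.exp (-(z.re + 1) * Real.log ((n + 1 : ℕ) + t))
          ≤ 1 * Real.exp (-(1 + ε) * Real.log ((n:ℝ) + 1)) := by
            apply mul_le_mul
            · simpa [Complex.norm_real, abs_of_pos h0] using h1
            · exact Real.exp_le_exp.mpr h2
            · positivity
            · norm_num
        _ = ((n:ℝ) + 1) ^ (-(1 + ε)) := by
            rw [one_mul, Real.rpow_def_of_pos (by positivity)]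
            ring_nf
    calc ‖∫ t in (0:ℝ)..1, (t : ℂ) * Complex.exp (-(z + 1) * Real.log ((n + 1 : ℕ) + t))‖
        ≤ ((n:ℝ) + 1) ^ (-(1 + ε)) * |1 - 0| :=
          intervalIntegral.norm_integral_le_of_norm_le_const hbd
      _ = ((n:ℝ) + 1) ^ (-(1 + ε)) := by norm_num
  exact ((hdiff.differentiableAt (hSopen.mem_nhds hz₀S)).differentiableWithinAt)
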